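/- Assume the monad T preserves finite sets, i.e., T X is finite whenever X is finite. Then the image of t_L : A* → O^{A*} is finite if and only if the image of its free T-extension t_L♯ : T(A*) → O^{A*} is finite. (Equivalently: the minimal Moore automaton accepting L is finite if and only if the minimal T-automaton accepting L is finite, since their state spaces are img(t_L) and img(t_L♯) respectively.) -/

import Mathlib

/-- A monad on the category of sets, given by an endofunctor `T` with unit `pure` (η)
and multiplication `mult` (μ), satisfying functoriality, naturality and the monad laws. -/
structure SetMonad where
  T : Type → Type
  map : {X Y : Type} → (X → Y) → T X → T Y
  pure : {X : Type} → X → T X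
  mult : {X : Type} → T (T X) → T X
  map_id : ∀ {X : Type} (t : T X), map id t = t
  map_comp : ∀ {X Y Z : Type} (g : Y → Z) (f : X → Y) (t : T X),
    map (g ∘ f) t = map g (map f t)
  pure_natural : ∀ {X Y : Type} (f : X → Y) (x : X), map f (pure x) = pure (f x)
  mult_natural : ∀ {X Y : Type} (f : X → Y) (t : T (T X)),
    map f (mult t) = mult (map (map f) t)
  mult_pure : ∀ {X : Type} (t : T X), mult (pure t) = t
  mult_map_pure : ∀ {X : Type} (t : T X), mult (map pure t) = t
  mult_assoc : ∀ {X : Type} (t : T (T (T X))), mult (mult t) = mult (map mult t)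

/-- An Eilenberg-Moore algebra `(carrier, str)` for the monad `M`. -/
structure AlgOver (M : SetMonad) where
  carrier : Type
  str : M.T carrier → carrier
  str_pure : ∀ x, str (M.pure x) = x
  str_mult : ∀ t, str (M.mult t) = str (M.map str t)

/-- `f` is a `T`-algebra homomorphism from `X` to `Y`: `f ∘ h = k ∘ T f`. -/
def IsHom (M : SetMonad) (X Y : AlgOver M) (f : X.carrier → Y.carrier) : Prop :=
  ∀ t : M.T X.carrier, f (X.str t) = Y.str (M.map f t)

/-- The free `T`-algebra `(T U, μ_U)` on a set `U`. -/
def freeAlg (M : SetMonad) (U : Type) : AlgOver M where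
  carrier := M.T U
  str := M.mult
  str_pure := M.mult_pure
  str_mult := M.mult_assoc

/-- The free `T`-extension `g♯ = v ∘ T g : T U → V` of a function `g : U → V`
into a `T`-algebra `(V, v)`. -/
def extAlg (M : SetMonad) {U : Type} (V : AlgOver M) (g : U → V.carrier) :
    M.T U → V.carrier :=
  fun t => V.str (M.map g t)

/-- The pointwise `T`-algebra structure on `V^A` for a `T`-algebra `V`. -/
def powAlg (M : SetMonad) (A : Type) (V : AlgOver M) : AlgOver M where
  carrier := A → V.carrier
  str := fun t a => V.str (M.map (fun g => g a) t)
  str_pure := by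
    intro x
    funext a
    show V.str (M.map (fun g => g a) (M.pure x)) = x a
    rw [M.pure_natural]
    exact V.str_pure _
  str_mult := by
    intro t
    funext a
    show V.str (M.map (fun g => g a) (M.mult t)) =
      V.str (M.map (fun g => g a) (M.map (fun t a => V.str (M.map (fun g => g a) t)) t))
    rw [M.mult_natural, V.str_mult, ← M.map_comp, ← M.map_comp]
    rfl

/-- The residual-language map `t_L : A* → O^{A*}`, `t_L(u)(v) = L(uv)`. -/
def tLang (A : Type) {Oc : Type} (L : List A → Oc) : List A → List A → Oc :=
  fun u v => L (u ++ v)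

/-- The free `T`-extension `t_L♯ : T(A*) → O^{A*}` of `t_L`. -/
def tLangS (M : SetMonad) (A : Type) (O : AlgOver M) (L : List A → O.carrier) :
    M.T (List A) → List A → O.carrier :=
  extAlg M (powAlg M (List A) O) (tLang A L)

/-- if `T` preserves finite sets, then the image of `t_L` is finite iff
the image of its free `T`-extension `t_L♯` is finite (minimal Moore automaton finite
iff minimal `T`-automaton finite). -/
theorem stmt4 (M : SetMonad) (hfin : ∀ X : Type, Finite X → Finite (M.T X))
    (A : Type) [Finite A] (O : AlgOver M) (L : List A → O.carrier) :
    (Set.range (tLang A L)).Finite ↔ (Set.range (tLangS M A O L)).Finite := by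
  constructor
  · intro h
    have hS : Finite (Set.range (tLang A L)) := h.to_subtype
    have hT : Finite (M.T (Set.range (tLang A L))) := hfin _ hS
    apply Set.Finite.subset (Set.finite_range
      (fun s : M.T (Set.range (tLang A L)) =>
        (powAlg M (List A) O).str (M.map Subtype.val s)))
    rintro _ ⟨t, rfl⟩
    refine ⟨M.map (fun u => ⟨tLang A L u, ⟨u, rfl⟩⟩) t, ?_⟩
    show (powAlg M (List A) O).str (M.map Subtype.val _) = tLangS M A O L t
    erw [← M.map_comp]
    rfl
  · intro h
    apply Set.Finite.subset h
    rintro _ ⟨u, rfl⟩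
    refine ⟨M.pure u, ?_⟩
    show (powAlg M (List A) O).str (M.map (tLang A L) (M.pure u)) = tLang A L u
    erw [M.pure_natural]
    exact (powAlg M (List A) O).str_pure _
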